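/- arXiv:2402.13381 — 3 statements merged into one kernel-verified Lean document; each statement's English description precedes it below -/
import Mathlib

section
/- Let G = (V,E) be a finite undirected graph, and let T₁ ∈ F^{M×N} and T₂ ∈ F^{N×P} be graph-partitioned matrices over G such that the column block partition of T₁ equals the row block partition of T₂. If (T₁,G) satisfies the GIRS property with constant c₁ and (T₂,G) satisfies the GIRS property with constant c₂, then (T₁T₂, G) satisfies the GIRS property with constant c₁ + c₂; that is, rank (T₁T₂)⟨Ā,A⟩ ≤ (c₁+c₂) · E(A) for all A ⊆ V. -/
open Matrix

attribute [local instance] Classical.propDecidable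

namespace TSS

variable {F : Type*} [Field F] {V : Type*} [Fintype V] [DecidableEq V]

/-- The `(i,j)` block of a graph-partitioned matrix. -/
def blockOf {m n : V → ℕ} (T : Matrix ((i : V) × Fin (m i)) ((j : V) × Fin (n j)) F)
    (i j : V) : Matrix (Fin (m i)) (Fin (n j)) F :=
  fun a b => T ⟨i, a⟩ ⟨j, b⟩

/-- The submatrix `T⟨A,B⟩` of a graph-partitioned matrix. -/
def subBlock {m n : V → ℕ} (T : Matrix ((i : V) × Fin (m i)) ((j : V) × Fin (n j)) F)
    (A B : Set V) :
    Matrix {p : (i : V) × Fin (m i) // p.1 ∈ A} {q : (j : V) × Fin (n j) // q.1 ∈ B} F :=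
  T.submatrix (fun p => p.1) (fun q => q.1)

/-- The Hankel block `T⟨Ā,A⟩` induced by `A`. -/
def hankelBlock {m n : V → ℕ} (T : Matrix ((i : V) × Fin (m i)) ((j : V) × Fin (n j)) F)
    (A : Set V) :
    Matrix {p : (i : V) × Fin (m i) // p.1 ∈ Aᶜ} {q : (j : V) × Fin (n j) // q.1 ∈ A} F :=
  subBlock T Aᶜ A

/-- The number of border edges of `A`: edges of `G` with one endpoint in `A` and the other
outside of `A` (each such undirected edge is counted once, via its orientation out of `A`). -/
noncomputable def edgeCount (G : SimpleGraph V) (A : Set V) : ℕ :=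
  Nat.card {e : V × V // e.1 ∈ A ∧ e.2 ∉ A ∧ G.Adj e.1 e.2}

/-- The vertex set of the connected component containing `i` after deleting the edge `{i,j}`. -/
def side (G : SimpleGraph V) (i j : V) : Set V :=
  {v | (G.deleteEdges {s(i, j)}).Reachable i v}

/-- The unit Hankel block associated with the directed edge `(i,j)`. -/
def unitHankel (G : SimpleGraph V) {m n : V → ℕ}
    (T : Matrix ((i : V) × Fin (m i)) ((j : V) × Fin (n j)) F) (i j : V) :=
  hankelBlock T (side G i j)

/-- `outChain Out Trans k i w j` is the product
`Out^i_{p_{ν−1}} · Trans^{p_{ν−1}}_{i,p_{ν−2}} ⋯ Trans^{k}_{p₁,j}` along the walk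
`w : k = p₀ − p₁ − ⋯ − p_ν = i`, with incoming edge `(j,k)`. -/
noncomputable def outChain {G : SimpleGraph V} {m : V → ℕ} {ρ : V → V → ℕ}
    (Out : ∀ k i : V, Matrix (Fin (m k)) (Fin (ρ i k)) F)
    (Trans : ∀ k i j : V, Matrix (Fin (ρ k i)) (Fin (ρ j k)) F) :
    ∀ (k i : V), G.Walk k i → ∀ j : V, Matrix (Fin (m i)) (Fin (ρ j k)) F
  | k, _, .nil, j => Out k j
  | k, _, .cons (v := k') _ w, j => outChain Out Trans k' _ w k * Trans k k' j

/-- `pathMatrix Inp Trans Out j i w` is the product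
`Out^i_{p_{ν−1}} · Trans^{p_{ν−1}}_{i,p_{ν−2}} ⋯ Trans^{p₁}_{p₂,j} · Inp^j_{p₁}` along the
walk `w : j = p₀ − p₁ − ⋯ − p_ν = i` (and junk `0` for the empty walk). -/
noncomputable def pathMatrix {G : SimpleGraph V} {m n : V → ℕ} {ρ : V → V → ℕ}
    (Inp : ∀ k j : V, Matrix (Fin (ρ k j)) (Fin (n k)) F)
    (Trans : ∀ k i j : V, Matrix (Fin (ρ k i)) (Fin (ρ j k)) F)
    (Out : ∀ k i : V, Matrix (Fin (m k)) (Fin (ρ i k)) F) :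
    ∀ (j i : V), G.Walk j i → Matrix (Fin (m i)) (Fin (n j)) F
  | _, _, .nil => 0
  | j, i, .cons (v := p1) _ w => outChain Out Trans p1 i w j * Inp j p1

/-- A TSS representation of the graph-partitioned matrix `T` on the tree `G`, with
output dimensions `m`, input dimensions `n` and rank profile `ρ` (only the values of the
generators and of `ρ` on (pairs of adjoining) directed edges of `G` are relevant). -/
structure TSSRepr (G : SimpleGraph V) (m n : V → ℕ) (ρ : V → V → ℕ)
    (T : Matrix ((i : V) × Fin (m i)) ((j : V) × Fin (n j)) F) where
  D : ∀ k : V, Matrix (Fin (m k)) (Fin (n k)) F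
  Inp : ∀ k j : V, Matrix (Fin (ρ k j)) (Fin (n k)) F
  Trans : ∀ k i j : V, Matrix (Fin (ρ k i)) (Fin (ρ j k)) F
  Out : ∀ k i : V, Matrix (Fin (m k)) (Fin (ρ i k)) F
  diag : ∀ i : V, blockOf T i i = D i
  offdiag : ∀ {i j : V}, i ≠ j → ∀ w : G.Walk j i, w.IsPath →
      blockOf T i j = pathMatrix Inp Trans Out j i w


private lemma matrix_rank_add_le {F : Type*} [Field F] {α β : Type*} [Fintype α] [Fintype β]
    (A B : Matrix α β F) : (A + B).rank ≤ A.rank + B.rank := by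
  classical
  rw [Matrix.rank, Matrix.rank, Matrix.rank, Matrix.mulVecLin_add]
  refine le_trans (Submodule.finrank_mono ?_) (Submodule.finrank_add_le_finrank_add_finrank _ _)
  rintro x ⟨v, rfl⟩
  exact Submodule.add_mem_sup ⟨v, rfl⟩ ⟨v, rfl⟩

/-- if `(T₁,G)` and `(T₂,G)` satisfy the GIRS property with constants
`c₁` and `c₂` (the column partition of `T₁` equal to the row partition of `T₂`, `G` any
finite graph), then `(T₁T₂,G)` satisfies the GIRS property with constant `c₁ + c₂`. -/
theorem girs_mul {F : Type*} [Field F] {V : Type*} [Fintype V] [DecidableEq V]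
    (G : SimpleGraph V) (m n p : V → ℕ) (c₁ c₂ : ℕ)
    (T₁ : Matrix ((i : V) × Fin (m i)) ((j : V) × Fin (n j)) F)
    (T₂ : Matrix ((i : V) × Fin (n i)) ((j : V) × Fin (p j)) F)
    (h₁ : ∀ A : Set V, (hankelBlock T₁ A).rank ≤ c₁ * edgeCount G A)
    (h₂ : ∀ A : Set V, (hankelBlock T₂ A).rank ≤ c₂ * edgeCount G A) :
    ∀ A : Set V, (hankelBlock (T₁ * T₂) A).rank ≤ (c₁ + c₂) * edgeCount G A := by
  intro A
  have key : hankelBlock (T₁ * T₂) A =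
      hankelBlock T₁ A * subBlock T₂ A A + subBlock T₁ Aᶜ Aᶜ * hankelBlock T₂ A :=
    Matrix.toBlock_mul_eq_add _ _ _ T₁ T₂
  rw [key]
  calc (hankelBlock T₁ A * subBlock T₂ A A + subBlock T₁ Aᶜ Aᶜ * hankelBlock T₂ A).rank
      ≤ (hankelBlock T₁ A * subBlock T₂ A A).rank
        + (subBlock T₁ Aᶜ Aᶜ * hankelBlock T₂ A).rank := matrix_rank_add_le _ _
    _ ≤ (hankelBlock T₁ A).rank + (hankelBlock T₂ A).rank :=
        add_le_add (Matrix.rank_mul_le_left _ _) (Matrix.rank_mul_le_right _ _)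
    _ ≤ c₁ * edgeCount G A + c₂ * edgeCount G A := add_le_add (h₁ A) (h₂ A)
    _ = (c₁ + c₂) * edgeCount G A := (add_mul _ _ _).symm

end TSS
end

section
/- Let G = (V,E) be a finite undirected graph and let T ∈ F^{N×N} be an invertible graph-partitioned matrix over G whose row and column block partitions coincide. If (T,G) satisfies the GIRS property with constant c, then (T⁻¹,G) also satisfies the GIRS property with the same constant c; that is, rank (T⁻¹)⟨Ā,A⟩ ≤ c · E(A) for all A ⊆ V. -/
open Matrix

attribute [local instance] Classical.propDecidable

namespace TSS

variable {F : Type*} [Field F] {V : Type*} [Fintype V] [DecidableEq V]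

lemma finrank_range_comp_add {F : Type*} [Field F] {ι κ₁ κ₂ : Type*}
    [Fintype ι] [Fintype κ₁] [Fintype κ₂]
    (π : (ι → F) →ₗ[F] (κ₂ → F)) (e : (κ₁ → F) →ₗ[F] (ι → F))
    (he : Function.Injective e) (hker : LinearMap.ker π = LinearMap.range e)
    (L : (ι → F) ≃ₗ[F] (ι → F)) :
    Module.finrank F ↥(LinearMap.range (π ∘ₗ (L : (ι → F) →ₗ[F] (ι → F)) ∘ₗ e)) +
      Module.finrank F ↥((LinearMap.range e).map (L : (ι → F) →ₗ[F] (ι → F)) ⊓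
        LinearMap.range e) = Module.finrank F (κ₁ → F) := by
  have hLe : Function.Injective ((L : (ι → F) →ₗ[F] (ι → F)) ∘ₗ e) :=
    L.injective.comp he
  have hrn := LinearMap.finrank_range_add_finrank_ker
    (π ∘ₗ (L : (ι → F) →ₗ[F] (ι → F)) ∘ₗ e)
  have hker' : LinearMap.ker (π ∘ₗ (L : (ι → F) →ₗ[F] (ι → F)) ∘ₗ e) =
      Submodule.comap ((L : (ι → F) →ₗ[F] (ι → F)) ∘ₗ e) (LinearMap.range e) := by
    rw [← hker]
    exact LinearMap.ker_comp _ _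
  have hmap : (Submodule.comap ((L : (ι → F) →ₗ[F] (ι → F)) ∘ₗ e)
      (LinearMap.range e)).map ((L : (ι → F) →ₗ[F] (ι → F)) ∘ₗ e) =
      (LinearMap.range e).map (L : (ι → F) →ₗ[F] (ι → F)) ⊓ LinearMap.range e := by
    rw [Submodule.map_comap_eq, LinearMap.range_comp]
  have hfk : Module.finrank F ↥(LinearMap.ker (π ∘ₗ (L : (ι → F) →ₗ[F] (ι → F)) ∘ₗ e)) =
      Module.finrank F ↥((LinearMap.range e).map (L : (ι → F) →ₗ[F] (ι → F)) ⊓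
        LinearMap.range e) := by
    rw [hker', ← hmap]
    exact (Submodule.equivMapOfInjective _ hLe _).finrank_eq
  rw [← hrn, hfk]

lemma rank_submatrix_inv {F : Type*} [Field F] {ι : Type*} [Fintype ι] [DecidableEq ι]
    (A : Set ι) (T : Matrix ι ι F) (hT : IsUnit T) :
    (T⁻¹.submatrix (Subtype.val : {p // p ∈ Aᶜ} → ι) (Subtype.val : {q // q ∈ A} → ι)).rank =
    (T.submatrix (Subtype.val : {p // p ∈ Aᶜ} → ι) (Subtype.val : {q // q ∈ A} → ι)).rank := by
  classical
  let Em : Matrix ι {q : ι // q ∈ A} F :=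
    (1 : Matrix ι ι F).submatrix (Equiv.refl ι) Subtype.val
  let Pm : Matrix {p : ι // p ∈ Aᶜ} ι F :=
    (1 : Matrix ι ι F).submatrix Subtype.val (Equiv.refl ι)
  have hfact : ∀ M : Matrix ι ι F,
      M.submatrix (Subtype.val : {p // p ∈ Aᶜ} → ι) (Subtype.val : {q // q ∈ A} → ι) =
      Pm * M * Em := by
    intro M
    have h1 : Pm * M = M.submatrix Subtype.val id := by
      rw [show Pm = (1 : Matrix ι ι F).submatrix Subtype.val (Equiv.refl ι) from rfl,
        Matrix.one_submatrix_mul]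
      rfl
    have h2 : M.submatrix (Subtype.val : {p // p ∈ Aᶜ} → ι) id * Em =
        M.submatrix Subtype.val Subtype.val := by
      rw [show Em = (1 : Matrix ι ι F).submatrix (Equiv.refl ι) Subtype.val from rfl,
        Matrix.mul_submatrix_one]
      rfl
    rw [h1, h2]
  have hEm : ∀ (x : {q : ι // q ∈ A} → F) (j : ι),
      Em.mulVec x j = if h : j ∈ A then x ⟨j, h⟩ else 0 := by
    intro x j
    show ((1 : Matrix ι ι F).submatrix (Equiv.refl ι) Subtype.val).mulVec x j = _
    split_ifs with h
    · rw [Matrix.mulVec, dotProduct, Finset.sum_eq_single (⟨j, h⟩ : {q : ι // q ∈ A})]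
      · simp [Matrix.one_apply]
      · intro b _ hb
        have hne : j ≠ b.val := fun hjb => hb (Subtype.ext hjb.symm)
        simp [Matrix.one_apply, hne]
      · simp
    · rw [Matrix.mulVec, dotProduct]
      apply Finset.sum_eq_zero
      intro b _
      have hne : j ≠ b.val := fun hjb => h (hjb ▸ b.2)
      simp [Matrix.one_apply, hne]
  have hPm : ∀ (x : ι → F) (q : {p : ι // p ∈ Aᶜ}), Pm.mulVec x q = x q.val := by
    intro x q
    show ((1 : Matrix ι ι F).submatrix Subtype.val (Equiv.refl ι)).mulVec x q = _
    simp [Matrix.mulVec, dotProduct, Matrix.one_apply]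
  have he : Function.Injective Em.mulVecLin := by
    intro x y hxy
    funext p
    have h1 : Em.mulVec x p.val = Em.mulVec y p.val := congrFun hxy p.val
    rw [hEm, hEm] at h1
    simpa [p.2] using h1
  have hker : LinearMap.ker Pm.mulVecLin = LinearMap.range Em.mulVecLin := by
    ext x
    simp only [LinearMap.mem_ker, LinearMap.mem_range, Matrix.mulVecLin_apply]
    constructor
    · intro hx
      refine ⟨fun p => x p.val, ?_⟩
      funext j
      rw [hEm]
      split_ifs with h
      · rfl
      · have hx0 : Pm.mulVec x ⟨j, h⟩ = 0 := congrFun hx ⟨j, h⟩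
        rw [hPm] at hx0
        exact hx0.symm
    · rintro ⟨y, rfl⟩
      funext q
      rw [show (0 : {p : ι // p ∈ Aᶜ} → F) q = 0 from rfl, hPm, hEm]
      have hq : ¬ q.val ∈ A := q.2
      simp [hq]
  have hdet : IsUnit T.det := (Matrix.isUnit_iff_isUnit_det T).mp hT
  let L : (ι → F) ≃ₗ[F] (ι → F) :=
    LinearEquiv.ofLinear T.mulVecLin T⁻¹.mulVecLin
      (by rw [← Matrix.mulVecLin_mul, Matrix.mul_nonsing_inv _ hdet, Matrix.mulVecLin_one])
      (by rw [← Matrix.mulVecLin_mul, Matrix.nonsing_inv_mul _ hdet, Matrix.mulVecLin_one])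
  have hL : (L : (ι → F) →ₗ[F] (ι → F)) = T.mulVecLin := rfl
  have hLs : (L.symm : (ι → F) →ₗ[F] (ι → F)) = T⁻¹.mulVecLin := rfl
  have hrank : ∀ (M : Matrix ι ι F) (LM : (ι → F) ≃ₗ[F] (ι → F)),
      (LM : (ι → F) →ₗ[F] (ι → F)) = M.mulVecLin →
      (M.submatrix (Subtype.val : {p // p ∈ Aᶜ} → ι)
        (Subtype.val : {q // q ∈ A} → ι)).rank = Module.finrank F
        ↥(LinearMap.range (Pm.mulVecLin ∘ₗ (LM : (ι → F) →ₗ[F] (ι → F)) ∘ₗ Em.mulVecLin)) := by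
    intro M LM hLM
    rw [Matrix.rank, hfact, Matrix.mulVecLin_mul, Matrix.mulVecLin_mul, hLM,
      LinearMap.comp_assoc]
  have keyT := finrank_range_comp_add Pm.mulVecLin Em.mulVecLin he hker L
  have keyI := finrank_range_comp_add Pm.mulVecLin Em.mulVecLin he hker L.symm
  set S := LinearMap.range Em.mulVecLin with hS
  have hsub : (S.map (L.symm : (ι → F) →ₗ[F] (ι → F))).map (L : (ι → F) →ₗ[F] (ι → F)) = S := by
    rw [← Submodule.map_comp]
    simp
  have hinf : Module.finrank F ↥(S.map (L.symm : (ι → F) →ₗ[F] (ι → F)) ⊓ S) =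
      Module.finrank F ↥(S.map (L : (ι → F) →ₗ[F] (ι → F)) ⊓ S) := by
    have hme : (S.map (L.symm : (ι → F) →ₗ[F] (ι → F)) ⊓ S).map
        (L : (ι → F) →ₗ[F] (ι → F)) = S.map (L : (ι → F) →ₗ[F] (ι → F)) ⊓ S := by
      rw [Submodule.map_inf ((L : (ι → F) →ₗ[F] (ι → F))) L.injective, hsub, inf_comm]
    rw [← LinearEquiv.finrank_map_eq L (S.map (L.symm : (ι → F) →ₗ[F] (ι → F)) ⊓ S), hme]
  rw [hrank T⁻¹ L.symm hLs, hrank T L hL]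
  omega

/-- if `T` is invertible (identical row and column block partitions) and
`(T,G)` satisfies the GIRS property with constant `c` (`G` any finite graph), then
`(T⁻¹,G)` satisfies the GIRS property with the same constant `c`. -/
theorem girs_inv {F : Type*} [Field F] {V : Type*} [Fintype V] [DecidableEq V]
    (G : SimpleGraph V) (n : V → ℕ) (c : ℕ)
    (T : Matrix ((i : V) × Fin (n i)) ((j : V) × Fin (n j)) F)
    (hT : IsUnit T)
    (h : ∀ A : Set V, (hankelBlock T A).rank ≤ c * edgeCount G A) :
    ∀ A : Set V, (hankelBlock T⁻¹ A).rank ≤ c * edgeCount G A := by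
  intro A
  have heq : (hankelBlock T⁻¹ A).rank = (hankelBlock T A).rank :=
    rank_submatrix_inv {p : (i : V) × Fin (n i) | p.1 ∈ A} T hT
  rw [heq]
  exact h A

end TSS
end

section
/- Let T be a TSS matrix on a finite connected acyclic undirected graph G = (V,E) with rank profile ρ and generators D, Inp, Trans, Out. Let x = (x_i)_{i∈V} with x_i ∈ F^{n_i} be given, and suppose the state vectors s_{(i,j)} ∈ F^{ρ(i,j)}, one for each directed edge (i,j), satisfy the state equations s_{(i,j)} = Σ_{w ∈ N(i)∖{j}} Trans^i_{j,w} · s_{(w,i)} + Inp^i_j · x_i for all directed edges (i,j), where N(i) is the set of neighbors of i. Then the vectors b_j := Σ_{i ∈ N(j)} Out^j_i · s_{(i,j)} + D^j · x_j satisfy b_j = Σ_{k ∈ V} T⟨j,k⟩ · x_k for every j ∈ V; that is, the output equations reproduce the matrix-vector product b = Tx. -/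
open Matrix

attribute [local instance] Classical.propDecidable

namespace TSS

variable {F : Type*} [Field F] {V : Type*} [Fintype V] [DecidableEq V]

section KeyLemmas

set_option linter.unusedSectionVars false

lemma side_not_reachable {G : SimpleGraph V} (hG : G.IsTree) {i j : V} (h : G.Adj i j) :
    ¬ (G.deleteEdges {s(i,j)}).Reachable i j :=
  ((SimpleGraph.isAcyclic_iff_forall_adj_isBridge.mp hG.IsAcyclic) h)

lemma mem_side_self {G : SimpleGraph V} {i j : V} : i ∈ side G i j := SimpleGraph.Reachable.refl i

lemma side_disjoint {G : SimpleGraph V} (hG : G.IsTree) {i j v : V} (h : G.Adj i j)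
    (h1 : v ∈ side G i j) (h2 : v ∈ side G j i) : False := by
  have h2' : (G.deleteEdges {s(j,i)}).Reachable j v := h2
  rw [Sym2.eq_swap] at h2'
  exact side_not_reachable hG h (h1.trans h2'.symm)

lemma not_mem_side {G : SimpleGraph V} (hG : G.IsTree) {i j : V} (h : G.Adj i j) : j ∉ side G i j :=
  fun hj => side_not_reachable hG h hj

lemma mem_side_iff {G : SimpleGraph V} (hG : G.IsTree) {i j v : V} (h : G.Adj i j) :
    v ∈ side G i j ↔ ∃ p : G.Walk i v, j ∉ p.support := by
  constructor
  · rintro ⟨p⟩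
    by_cases hj : j ∈ p.support
    · exact absurd ⟨p.takeUntil j hj⟩ (side_not_reachable hG h)
    · refine ⟨p.transfer G (fun e he => ?_), ?_⟩
      · exact (SimpleGraph.edgeSet_mono (SimpleGraph.deleteEdges_le _)) (p.edges_subset_edgeSet he)
      · rwa [SimpleGraph.Walk.support_transfer]
  · rintro ⟨p, hp⟩
    refine ⟨p.toDeleteEdges {s(i,j)} (fun e he hes => ?_)⟩
    rw [Set.mem_singleton_iff] at hes
    subst hes
    exact hp (p.snd_mem_support_of_mem_edges he)

lemma support_mem_side {G : SimpleGraph V} (hG : G.IsTree) {i j v : V} (h : G.Adj i j) {p : G.Walk i v}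
    (hp : j ∉ p.support) {u : V} (hu : u ∈ p.support) : u ∈ side G i j := by
  refine (mem_side_iff hG h).mpr ⟨p.takeUntil u hu, fun hj => hp ?_⟩
  exact p.support_takeUntil_subset hu hj

lemma side_pairwise_disjoint {G : SimpleGraph V} (hG : G.IsTree) {j i₁ i₂ v : V} (h₁ : G.Adj i₁ j) (h₂ : G.Adj i₂ j)
    (hv₁ : v ∈ side G i₁ j) (hv₂ : v ∈ side G i₂ j) : i₁ = i₂ := by
  obtain ⟨p₁, hp₁⟩ := (mem_side_iff hG h₁).mp hv₁
  obtain ⟨p₂, hp₂⟩ := (mem_side_iff hG h₂).mp hv₂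
  have b₁ : j ∉ p₁.bypass.support := fun hh => hp₁ (p₁.support_bypass_subset hh)
  have b₂ : j ∉ p₂.bypass.support := fun hh => hp₂ (p₂.support_bypass_subset hh)
  have q₁path : (SimpleGraph.Walk.cons h₁.symm p₁.bypass).IsPath := p₁.bypass_isPath.cons b₁
  have q₂path : (SimpleGraph.Walk.cons h₂.symm p₂.bypass).IsPath := p₂.bypass_isPath.cons b₂
  have heq := (hG.existsUnique_path j v).unique q₁path q₂path
  have := congrArg (fun q : G.Walk j v => q.getVert 1) heq
  simpa [SimpleGraph.Walk.getVert_cons_succ] using this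

lemma side_cover {G : SimpleGraph V} (hG : G.IsTree) {j v : V} (hvj : v ≠ j) :
    ∃ i, G.Adj i j ∧ v ∈ side G i j := by
  obtain ⟨p, hp⟩ := (hG.existsUnique_path j v).exists
  cases p with
  | nil => exact absurd rfl hvj
  | cons h q =>
    rw [SimpleGraph.Walk.cons_isPath_iff] at hp
    exact ⟨_, h.symm, (mem_side_iff hG h.symm).mpr ⟨q, hp.2⟩⟩

lemma side_decomp {G : SimpleGraph V} (hG : G.IsTree) {i j v : V} (h : G.Adj i j)
    (hv : v ∈ side G i j) (hvi : v ≠ i) :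
    ∃ w', G.Adj w' i ∧ w' ≠ j ∧ v ∈ side G w' i := by
  obtain ⟨p, hp⟩ := (mem_side_iff hG h).mp hv
  have hbj : j ∉ p.bypass.support := fun hh => hp (p.support_bypass_subset hh)
  have hbp := p.bypass_isPath
  cases hq : p.bypass with
  | nil => exact absurd rfl hvi
  | cons h' q =>
    rw [hq] at hbj hbp
    rw [SimpleGraph.Walk.cons_isPath_iff] at hbp
    refine ⟨_, h'.symm, ?_, (mem_side_iff hG h'.symm).mpr ⟨q, hbp.2⟩⟩
    rintro rfl
    exact hbj (by rw [SimpleGraph.Walk.support_cons]; exact List.mem_cons_of_mem _ q.start_mem_support)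

lemma not_mem_side_nbr {G : SimpleGraph V} (hG : G.IsTree) {i j w' : V} (h : G.Adj i j) (h' : G.Adj w' i)
    (hw'j : w' ≠ j) : j ∉ side G w' i := by
  intro hj
  have hj' : j ∈ side G i w' := by
    refine (mem_side_iff hG h'.symm).mpr ⟨SimpleGraph.Walk.cons h SimpleGraph.Walk.nil, ?_⟩
    simp only [SimpleGraph.Walk.support_cons, SimpleGraph.Walk.support_nil, List.mem_cons,
      List.mem_singleton, List.not_mem_nil]
    push_neg
    exact ⟨fun e => h'.ne (e.symm ▸ rfl), hw'j, trivial⟩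
  exact side_disjoint hG h' hj hj'

lemma side_subset {G : SimpleGraph V} (hG : G.IsTree) {i j w' : V} (h : G.Adj i j) (h' : G.Adj w' i)
    (hw'j : w' ≠ j) : side G w' i ⊆ side G i j := by
  intro v hv
  obtain ⟨p, hp⟩ := (mem_side_iff hG h').mp hv
  have hjp : j ∉ p.support := fun hj =>
    not_mem_side_nbr hG h h' hw'j (support_mem_side hG h' hp hj)
  refine (mem_side_iff hG h).mpr ⟨SimpleGraph.Walk.cons h'.symm p, ?_⟩
  rw [SimpleGraph.Walk.support_cons, List.mem_cons]
  exact fun hc => hc.elim (fun e => h.ne' e) hjp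

lemma not_mem_own_side {G : SimpleGraph V} (hG : G.IsTree) {i w' : V} (h' : G.Adj w' i) : i ∉ side G w' i :=
  fun hi => side_disjoint hG h' hi mem_side_self

lemma filter_side_eq {G : SimpleGraph V} (hG : G.IsTree) {i j : V} (h : G.Adj i j) :
    Finset.univ.filter (· ∈ side G i j)
      = insert i ((Finset.univ.filter (fun w => G.Adj w i ∧ w ≠ j)).biUnion
          (fun w' => Finset.univ.filter (· ∈ side G w' i))) := by
  ext v
  simp only [Finset.mem_insert, Finset.mem_biUnion, Finset.mem_filter, Finset.mem_univ, true_and]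
  constructor
  · intro hv
    by_cases hvi : v = i
    · exact Or.inl hvi
    · obtain ⟨w', hw1, hw2, hw3⟩ := side_decomp hG h hv hvi
      exact Or.inr ⟨w', ⟨hw1, hw2⟩, hw3⟩
  · rintro (rfl | ⟨w', ⟨hw1, hw2⟩, hw3⟩)
    · exact mem_side_self
    · exact side_subset hG h hw1 hw2 hw3

lemma univ_eq_sides {G : SimpleGraph V} (hG : G.IsTree) (j : V) :
    (Finset.univ : Finset V)
      = insert j ((Finset.univ.filter (fun i => G.Adj i j)).biUnion
          (fun i => Finset.univ.filter (· ∈ side G i j))) := by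
  ext v
  simp only [Finset.mem_insert, Finset.mem_biUnion, Finset.mem_filter, Finset.mem_univ, true_and,
    iff_true_intro trivial, true_iff]
  by_cases hvj : v = j
  · exact Or.inl hvj
  · obtain ⟨i, hi1, hi2⟩ := side_cover hG hvj
    exact Or.inr ⟨i, hi1, hi2⟩

lemma key_lemma {F : Type*} [Field F] {G : SimpleGraph V} (hG : G.IsTree)
    {m n : V → ℕ} {ρ : V → V → ℕ}
    {T : Matrix ((i : V) × Fin (m i)) ((j : V) × Fin (n j)) F}
    (R : TSSRepr G m n ρ T)
    (x : ∀ i : V, Fin (n i) → F) (s : ∀ i j : V, Fin (ρ i j) → F)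
    (hs : ∀ i j : V, G.Adj i j →
      s i j = (∑ w ∈ Finset.univ.filter (fun w => G.Adj w i ∧ w ≠ j),
          (R.Trans i j w).mulVec (s w i)) + (R.Inp i j).mulVec (x i)) :
    ∀ N : ℕ, ∀ i j : V, ∀ h : G.Adj i j,
    (Finset.univ.filter (· ∈ side G i j)).card ≤ N →
    ∀ (t : V) (w : G.Walk j t), (SimpleGraph.Walk.cons h w).IsPath →
    (outChain R.Out R.Trans j t w i).mulVec (s i j)
      = ∑ k ∈ Finset.univ.filter (· ∈ side G i j), (blockOf T t k).mulVec (x k) := by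
  intro N
  induction N with
  | zero =>
    intro i j h hcard t w hw
    exfalso
    have : i ∈ Finset.univ.filter (· ∈ side G i j) := by
      simp [mem_side_self]
    have := Finset.card_pos.mpr ⟨i, this⟩
    omega
  | succ N IH =>
    intro i j h hcard t w hw
    have hipath := hw
    rw [SimpleGraph.Walk.cons_isPath_iff] at hw
    have hti : t ≠ i := fun e => hw.2 (e ▸ w.end_mem_support)
    -- support of w lies in side G j i
    have hsupp : ∀ u ∈ w.support, u ∈ side G j i :=
      fun u hu => support_mem_side hG h.symm hw.2 hu
    rw [hs i j h, Matrix.mulVec_add]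
    -- second term
    have hInp : (outChain R.Out R.Trans j t w i).mulVec ((R.Inp i j).mulVec (x i))
        = (blockOf T t i).mulVec (x i) := by
      rw [Matrix.mulVec_mulVec, R.offdiag hti (SimpleGraph.Walk.cons h w) hipath]
      rfl
    -- first term
    have hsum : (outChain R.Out R.Trans j t w i).mulVec
          (∑ w' ∈ Finset.univ.filter (fun w' => G.Adj w' i ∧ w' ≠ j),
            (R.Trans i j w').mulVec (s w' i))
        = ∑ w' ∈ Finset.univ.filter (fun w' => G.Adj w' i ∧ w' ≠ j),
            ∑ k ∈ Finset.univ.filter (· ∈ side G w' i), (blockOf T t k).mulVec (x k) := by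
      rw [show (outChain R.Out R.Trans j t w i).mulVec
            (∑ w' ∈ Finset.univ.filter (fun w' => G.Adj w' i ∧ w' ≠ j),
              (R.Trans i j w').mulVec (s w' i))
          = ∑ w' ∈ Finset.univ.filter (fun w' => G.Adj w' i ∧ w' ≠ j),
              (outChain R.Out R.Trans j t w i).mulVec ((R.Trans i j w').mulVec (s w' i))
        from map_sum (outChain R.Out R.Trans j t w i).mulVecLin _ _]
      refine Finset.sum_congr rfl (fun w' hw' => ?_)
      rw [Finset.mem_filter] at hw'
      obtain ⟨-, hw1, hw2⟩ := hw'
      have hw'side : w' ∈ side G i j := side_subset hG h hw1 hw2 mem_side_self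
      have hw'supp : w' ∉ (SimpleGraph.Walk.cons h w).support := by
        rw [SimpleGraph.Walk.support_cons, List.mem_cons]
        rintro (rfl | hc)
        · exact hw1.ne rfl
        · exact side_disjoint hG h hw'side (hsupp w' hc)
      have hpath2 : (SimpleGraph.Walk.cons hw1 (SimpleGraph.Walk.cons h w)).IsPath :=
        hipath.cons hw'supp
      have hcard2 : (Finset.univ.filter (· ∈ side G w' i)).card ≤ N := by
        have hss : Finset.univ.filter (· ∈ side G w' i)
            ⊂ Finset.univ.filter (· ∈ side G i j) := by
          refine Finset.ssubset_iff_of_subset (fun v hv => ?_) |>.mpr ?_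
          · rw [Finset.mem_filter] at hv ⊢
            exact ⟨hv.1, side_subset hG h hw1 hw2 hv.2⟩
          · refine ⟨i, ?_, ?_⟩
            · simp [mem_side_self]
            · simpa using not_mem_own_side hG hw1
        have := Finset.card_lt_card hss
        omega
      rw [Matrix.mulVec_mulVec]
      exact IH w' i hw1 hcard2 t (SimpleGraph.Walk.cons h w) hpath2
    rw [hsum, hInp, filter_side_eq hG h]
    rw [Finset.sum_insert, Finset.sum_biUnion]
    · exact add_comm _ _
    · intro a ha b hb hab
      rw [Finset.coe_filter] at ha hb
      refine Finset.disjoint_left.mpr (fun v hv1 hv2 => hab ?_)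
      rw [Finset.mem_filter] at hv1 hv2
      exact side_pairwise_disjoint hG ha.2.1 hb.2.1 hv1.2 hv2.2
    · simp only [Finset.mem_biUnion, Finset.mem_filter, Finset.mem_univ, true_and, not_exists]
      rintro a ⟨⟨ha1, -⟩, ha3⟩
      exact not_mem_own_side hG ha1 ha3

end KeyLemmas

/-- given a TSS representation of `T` on the tree `G`, an input `x` and
states `s_{(i,j)}` satisfying the state equations
`s_{(i,j)} = Σ_{w ∈ N(i)∖{j}} Trans^i_{j,w} s_{(w,i)} + Inp^i_j x_i` on every directed
edge `(i,j)`, the output equations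
`b_j = Σ_{i ∈ N(j)} Out^j_i s_{(i,j)} + D^j x_j` reproduce the matrix-vector product:
`b_j = Σ_{k ∈ V} T⟨j,k⟩ x_k`. -/
theorem tss_matvec {F : Type*} [Field F] {V : Type*} [Fintype V] [DecidableEq V]
    (G : SimpleGraph V) (hG : G.IsTree) (m n : V → ℕ) (ρ : V → V → ℕ)
    (T : Matrix ((i : V) × Fin (m i)) ((j : V) × Fin (n j)) F)
    (R : TSSRepr G m n ρ T)
    (x : ∀ i : V, Fin (n i) → F) (s : ∀ i j : V, Fin (ρ i j) → F)
    (hs : ∀ i j : V, G.Adj i j →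
      s i j = (∑ w ∈ Finset.univ.filter (fun w => G.Adj w i ∧ w ≠ j),
          (R.Trans i j w).mulVec (s w i)) + (R.Inp i j).mulVec (x i)) :
    ∀ j : V,
      (∑ i ∈ Finset.univ.filter (fun i => G.Adj i j), (R.Out j i).mulVec (s i j))
          + (R.D j).mulVec (x j)
        = ∑ k : V, (blockOf T j k).mulVec (x k) := by
  intro j
  have key := key_lemma hG R x s hs (Fintype.card V)
  have hD : (R.D j).mulVec (x j) = (blockOf T j j).mulVec (x j) := by rw [R.diag]
  have hOut : ∀ i ∈ Finset.univ.filter (fun i => G.Adj i j),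
      (R.Out j i).mulVec (s i j)
        = ∑ k ∈ Finset.univ.filter (· ∈ side G i j), (blockOf T j k).mulVec (x k) := by
    intro i hi
    rw [Finset.mem_filter] at hi
    have hpath : (SimpleGraph.Walk.cons hi.2 (SimpleGraph.Walk.nil : G.Walk j j)).IsPath := by
      rw [SimpleGraph.Walk.cons_isPath_iff]
      exact ⟨SimpleGraph.Walk.IsPath.nil, by simp [hi.2.ne]⟩
    exact key i j hi.2 (Finset.card_filter_le _ _) j SimpleGraph.Walk.nil hpath
  rw [Finset.sum_congr rfl hOut, hD]
  conv_rhs => rw [univ_eq_sides hG j]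
  rw [Finset.sum_insert, Finset.sum_biUnion]
  · exact add_comm _ _
  · intro a ha b hb hab
    rw [Finset.coe_filter] at ha hb
    refine Finset.disjoint_left.mpr (fun v hv1 hv2 => hab ?_)
    rw [Finset.mem_filter] at hv1 hv2
    exact side_pairwise_disjoint hG ha.2 hb.2 hv1.2 hv2.2
  · simp only [Finset.mem_biUnion, Finset.mem_filter, Finset.mem_univ, true_and, not_exists]
    intro a ha
    exact not_mem_side hG ha.1 ha.2


end TSS
end
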